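/- For a linear control family g_θ = ⟨θ, ψ⟩ with ψ = (ψ₁,…,ψ_p) and the matrix H with entries H_{ij} = π(⟨∇ψ_i, ∇ψ_j⟩): if (1, ψ₁,…,ψ_p) are linearly independent in C²_poly, then H is symmetric positive definite, and the map θ ↦ σ²_∞(f + L g_θ) = 2 θᵀ H θ - 4⟨θ, b⟩ + σ²_∞(f), with b_i = π(ψ_i (f - π(f))), attains its unique minimum at θ* = H⁻¹ b. -/

import Mathlib

open MeasureTheory Real
open scoped BigOperators RealInnerProductSpace

noncomputable section

abbrev Euc (d : ℕ) := EuclideanSpace ℝ (Fin d)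

/-- Laplacian via the second iterated Fréchet derivative in coordinate directions. -/
def lapl {d : ℕ} (φ : Euc d → ℝ) (x : Euc d) : ℝ :=
  ∑ i : Fin d, iteratedFDeriv ℝ 2 φ x ![EuclideanSpace.single i 1, EuclideanSpace.single i 1]

/-- The Langevin generator `L φ = -⟨∇U, ∇φ⟩ + Δφ`. -/
def gen {d : ℕ} (U φ : Euc d → ℝ) (x : Euc d) : ℝ :=
  - ⟪gradient U x, gradient φ x⟫ + lapl φ x

/-- The Gibbs probability measure `π(dx) ∝ e^{-U(x)} dx`. -/
def gibbs {d : ℕ} (U : Euc d → ℝ) : Measure (Euc d) :=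
  ((∫⁻ x, ENNReal.ofReal (Real.exp (-U x)))⁻¹) •
    ((volume : Measure (Euc d)).withDensity fun x => ENNReal.ofReal (Real.exp (-U x)))

/-- Polynomial growth of the `k`-th derivative. -/
def PolyGrowthD {d : ℕ} (k : ℕ) (f : Euc d → ℝ) : Prop :=
  ∃ (C : ℝ) (p : ℕ), ∀ x, ‖iteratedFDeriv ℝ k f x‖ ≤ C * (1 + ‖x‖) ^ p

open Matrix

lemma vol_ac_gibbs {d : ℕ} (U : Euc d → ℝ) (hU : Continuous U)
    (hexp : Integrable fun x => Real.exp (-U x)) :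
    (volume : Measure (Euc d)) ≪ gibbs U := by
  have hmeas : Measurable fun x : Euc d => ENNReal.ofReal (Real.exp (-U x)) :=
    (Real.continuous_exp.comp hU.neg).measurable.ennreal_ofReal
  have h1 : (volume : Measure (Euc d)) ≪
      (volume : Measure (Euc d)).withDensity fun x => ENNReal.ofReal (Real.exp (-U x)) :=
    withDensity_absolutelyContinuous' hmeas.aemeasurable
      (Filter.Eventually.of_forall fun x => (ENNReal.ofReal_pos.mpr (Real.exp_pos _)).ne')
  refine h1.trans ?_
  intro s hs
  rw [gibbs, Measure.smul_apply, smul_eq_mul] at hs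
  rcases mul_eq_zero.mp hs with h | h
  · exfalso
    have hne : (∫⁻ x, ENNReal.ofReal (Real.exp (-U x))) ≠ ⊤ := by
      have hfin := hexp.hasFiniteIntegral
      rw [HasFiniteIntegral] at hfin
      have heq : ∀ x : Euc d, ‖Real.exp (-U x)‖ₑ = ENNReal.ofReal (Real.exp (-U x)) :=
        fun x => Real.enorm_eq_ofReal (Real.exp_pos _).le
      simp_rw [heq] at hfin
      exact hfin.ne
    exact (ENNReal.inv_ne_zero.mpr hne) h
  · exact h

lemma gradient_sum' {d p : ℕ} (ψ : Fin p → Euc d → ℝ) (θ : Fin p → ℝ) (x : Euc d)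
    (hψ : ∀ i, DifferentiableAt ℝ (ψ i) x) :
    gradient (fun y => ∑ i, θ i * ψ i y) x = ∑ i, θ i • gradient (ψ i) x := by
  have hf : fderiv ℝ (fun y => ∑ i, θ i * ψ i y) x = ∑ i, θ i • fderiv ℝ (ψ i) x := by
    rw [fderiv_fun_sum (fun i _ => ((hψ i).const_mul (θ i)))]
    exact Finset.sum_congr rfl fun i _ => fderiv_const_mul (hψ i) (θ i)
  show (InnerProductSpace.toDual ℝ (Euc d)).symm (fderiv ℝ _ x) = _
  rw [hf, map_sum]
  exact Finset.sum_congr rfl fun i _ => by rw [_root_.map_smul]; rfl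

theorem stmt_4 {d p : ℕ} (U : Euc d → ℝ) (ψ : Fin p → Euc d → ℝ) (f : Euc d → ℝ)
    (hU : ContDiff ℝ (⊤ : ℕ∞) U)
    (hexp : Integrable fun x => Real.exp (-U x))
    (hψ : ∀ i, ContDiff ℝ 2 (ψ i)) (hψpg : ∀ i, ∀ k ≤ 2, PolyGrowthD k (ψ i))
    (H : Matrix (Fin p) (Fin p) ℝ)
    (hH : ∀ i j, H i j = ∫ x, ⟪gradient (ψ i) x, gradient (ψ j) x⟫ ∂(gibbs U))
    (hHint : ∀ i j, Integrable (fun x => ⟪gradient (ψ i) x, gradient (ψ j) x⟫) (gibbs U))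
    (b : Fin p → ℝ)
    (hb : ∀ i, b i = ∫ x, ψ i x * (f x - ∫ y, f y ∂(gibbs U)) ∂(gibbs U))
    (hli : ∀ (c : Fin p → ℝ) (a : ℝ),
      (∀ᵐ x ∂(gibbs U), ∑ i, c i * ψ i x = a) → c = 0)
    (S : (Fin p → ℝ) → ℝ) (S0 : ℝ)
    (hS : ∀ θ, S θ = 2 * (θ ⬝ᵥ (H *ᵥ θ)) - 4 * (θ ⬝ᵥ b) + S0) :
    H.PosDef ∧ ∀ θ, θ ≠ H⁻¹ *ᵥ b → S (H⁻¹ *ᵥ b) < S θ := by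
  have hac : (volume : Measure (Euc d)) ≪ gibbs U := vol_ac_gibbs U hU.continuous hexp
  have hdiffAt : ∀ (x : Euc d) i, DifferentiableAt ℝ (ψ i) x :=
    fun x i => ((hψ i).differentiable (by norm_num)).differentiableAt
  have expand : ∀ (θ : Fin p → ℝ) (x : Euc d),
      ‖∑ i, θ i • gradient (ψ i) x‖ ^ 2
        = ∑ i, ∑ j, θ i * θ j * ⟪gradient (ψ i) x, gradient (ψ j) x⟫ := by
    intro θ x
    rw [← real_inner_self_eq_norm_sq, sum_inner]
    refine Finset.sum_congr rfl fun i _ => ?_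
    rw [inner_sum]
    refine Finset.sum_congr rfl fun j _ => ?_
    rw [real_inner_smul_left, real_inner_smul_right]; ring
  have key : ∀ θ : Fin p → ℝ,
      θ ⬝ᵥ (H *ᵥ θ) = ∫ x, ‖∑ i, θ i • gradient (ψ i) x‖ ^ 2 ∂(gibbs U) := by
    intro θ
    have hterm : ∀ i j, θ i * θ j * H i j
        = ∫ x, θ i * θ j * ⟪gradient (ψ i) x, gradient (ψ j) x⟫ ∂(gibbs U) := by
      intro i j; rw [hH i j, integral_const_mul]
    calc θ ⬝ᵥ (H *ᵥ θ) = ∑ i, ∑ j, θ i * θ j * H i j := by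
          simp only [dotProduct, Matrix.mulVec, Finset.mul_sum]
          exact Finset.sum_congr rfl fun i _ => Finset.sum_congr rfl fun j _ => by ring
      _ = ∑ i, ∑ j, ∫ x, θ i * θ j * ⟪gradient (ψ i) x, gradient (ψ j) x⟫ ∂(gibbs U) := by
          simp_rw [hterm]
      _ = ∫ x, ∑ i, ∑ j, θ i * θ j * ⟪gradient (ψ i) x, gradient (ψ j) x⟫ ∂(gibbs U) := by
          rw [integral_finset_sum _
            (fun i _ => integrable_finset_sum _ fun j _ => (hHint i j).const_mul _)]
          exact Finset.sum_congr rfl fun i _ =>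
            (integral_finset_sum _ fun j _ => (hHint i j).const_mul _).symm
      _ = ∫ x, ‖∑ i, θ i • gradient (ψ i) x‖ ^ 2 ∂(gibbs U) :=
          integral_congr_ae (Filter.Eventually.of_forall fun x => (expand θ x).symm)
  have hnonneg : ∀ θ : Fin p → ℝ, 0 ≤ θ ⬝ᵥ (H *ᵥ θ) := fun θ => by
    rw [key θ]; exact integral_nonneg fun x => sq_nonneg _
  have hpos : ∀ θ : Fin p → ℝ, θ ≠ 0 → 0 < θ ⬝ᵥ (H *ᵥ θ) := by
    intro θ hθ
    rcases (hnonneg θ).lt_or_eq with h | h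
    · exact h
    exfalso
    have hIδ : Integrable (fun x => ‖∑ i, θ i • gradient (ψ i) x‖ ^ 2) (gibbs U) :=
      (integrable_finset_sum _ fun i _ =>
        integrable_finset_sum _ fun j _ => (hHint i j).const_mul _).congr
        (Filter.Eventually.of_forall fun x => (expand θ x).symm)
    have hz : (fun x => ‖∑ i, θ i • gradient (ψ i) x‖ ^ 2) =ᵐ[gibbs U] 0 := by
      rw [← integral_eq_zero_iff_of_nonneg (fun x => sq_nonneg _) hIδ, ← key θ, ← h]
    have hG0 : (fun x => ∑ i, θ i • gradient (ψ i) x) =ᵐ[volume] (fun _ => (0 : Euc d)) := by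
      filter_upwards [hz.filter_mono hac.ae_le] with x hx
      have hx' : ‖∑ i, θ i • gradient (ψ i) x‖ ^ 2 = 0 := hx
      exact norm_eq_zero.mp ((pow_eq_zero_iff two_ne_zero).mp hx')
    have hGc : Continuous fun x => ∑ i, θ i • gradient (ψ i) x := by
      refine continuous_finset_sum _ fun i _ => Continuous.const_smul ?_ (θ i)
      exact ((InnerProductSpace.toDual ℝ (Euc d)).symm.continuous).comp
        ((hψ i).continuous_fderiv (by norm_num))
    have hGeq : (fun x => ∑ i, θ i • gradient (ψ i) x) = fun _ => (0 : Euc d) :=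
      (hGc.ae_eq_iff_eq volume continuous_const).mp hG0
    have hfd : ∀ x, fderiv ℝ (fun y => ∑ i, θ i * ψ i y) x = 0 := by
      intro x
      have hg : gradient (fun y => ∑ i, θ i * ψ i y) x = 0 := by
        rw [gradient_sum' ψ θ x (hdiffAt x)]
        exact congrFun hGeq x
      have : (InnerProductSpace.toDual ℝ (Euc d)).symm
          (fderiv ℝ (fun y => ∑ i, θ i * ψ i y) x) = 0 := hg
      exact (InnerProductSpace.toDual ℝ (Euc d)).symm.map_eq_zero_iff.mp this
    have hdiff : Differentiable ℝ fun y => ∑ i, θ i * ψ i y :=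
      fun x => DifferentiableAt.fun_sum fun i _ => (hdiffAt x i).const_mul (θ i)
    have hconst : ∀ x : Euc d, ∑ i, θ i * ψ i x = ∑ i, θ i * ψ i 0 := fun x =>
      is_const_of_fderiv_eq_zero hdiff hfd x 0
    exact hθ (hli θ (∑ i, θ i * ψ i 0) (Filter.Eventually.of_forall hconst))
  have hsym' : ∀ i j, H j i = H i j := fun i j => by
    rw [hH i j, hH j i]
    exact integral_congr_ae (Filter.Eventually.of_forall fun x => real_inner_comm _ _)
  have hherm : H.IsHermitian := by
    rw [Matrix.IsHermitian]
    ext i j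
    rw [Matrix.conjTranspose_apply, star_trivial, hsym' i j]
  have hPD : H.PosDef := by
    refine Matrix.PosDef.of_dotProduct_mulVec_pos hherm fun x hx => ?_
    have hsx : star x = x := funext fun i => star_trivial _
    rw [hsx]
    exact hpos x hx
  refine ⟨hPD, ?_⟩
  have hdet : IsUnit H.det := (Matrix.isUnit_iff_isUnit_det H).mp hPD.isUnit
  have hHb : H *ᵥ (H⁻¹ *ᵥ b) = b := by
    rw [Matrix.mulVec_mulVec, Matrix.mul_nonsing_inv _ hdet, Matrix.one_mulVec]
  have hsymm : ∀ x y : Fin p → ℝ, x ⬝ᵥ (H *ᵥ y) = y ⬝ᵥ (H *ᵥ x) := by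
    intro x y
    simp only [dotProduct, Matrix.mulVec, Finset.mul_sum]
    rw [Finset.sum_comm]
    refine Finset.sum_congr rfl fun j _ => Finset.sum_congr rfl fun i _ => ?_
    rw [hsym' i j]; ring
  intro θ hθne
  set t : Fin p → ℝ := H⁻¹ *ᵥ b with ht
  have hδ : θ - t ≠ 0 := sub_ne_zero.mpr hθne
  have hp := hpos (θ - t) hδ
  have hθeq : θ = (θ - t) + t := by ring
  rw [hS θ, hS t, hθeq, show b = H *ᵥ t from hHb.symm]
  simp only [Matrix.mulVec_add, dotProduct_add, add_dotProduct]
  have h1 := hsymm (θ - t) t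
  linarith
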